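/- Let f, g : (−1,1) → ℝ be given by f(x) = x and g(x) = x³. Then there is no continuous strictly monotone function s : (−1,1) → ℝ such that both A^[f] ≤ A^[s] and A^[g] ≤ A^[s] hold pointwise on all finite tuples from (−1,1). -/
import Mathlib


open Filter Set

/-- `m` is the value of the quasi-arithmetic mean `A^[f]` on the tuple `v` from `I`,
i.e. `m ∈ I` and `f m = (f v₁ + ⋯ + f vₙ)/n`. -/
def IsQAM (I : Set ℝ) (f : ℝ → ℝ) {n : ℕ} (v : Fin n → ℝ) (m : ℝ) : Prop :=
  m ∈ I ∧ f m = (∑ i, f (v i)) / n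

/-- `A^[f] ≤ A^[g]` pointwise on all (nonempty) finite tuples from `I` (the relation `f ≺ g`). -/
def QALE (I : Set ℝ) (f g : ℝ → ℝ) : Prop :=
  ∀ (n : ℕ), 0 < n → ∀ (v : Fin n → ℝ), (∀ i, v i ∈ I) →
    ∀ a b : ℝ, IsQAM I f v a → IsQAM I g v b → a ≤ b

/-- `A^[f] = A^[g]` on all (nonempty) finite tuples from `I`. -/
def QAEQ (I : Set ℝ) (f g : ℝ → ℝ) : Prop :=
  ∀ (n : ℕ), 0 < n → ∀ (v : Fin n → ℝ), (∀ i, v i ∈ I) →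
    ∀ a b : ℝ, IsQAM I f v a → IsQAM I g v b → a = b

lemma sum_if (N : ℕ) [NeZero N] (A B : ℝ) :
    ∑ i : Fin N, (if i = (0 : Fin N) then A else B) = A + ((N : ℝ) - 1) * B := by
  calc ∑ i : Fin N, (if i = (0 : Fin N) then A else B)
      = ∑ i : Fin N, ((if i = (0 : Fin N) then A - B else 0) + B) := by
        apply Finset.sum_congr rfl; intro i _; split <;> ring
    _ = A + ((N : ℝ) - 1) * B := by
        rw [Finset.sum_add_distrib, Finset.sum_ite_eq' Finset.univ (0 : Fin N)]
        simp [Finset.card_univ]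
        ring

lemma ivt_b {s : ℝ → ℝ} (hc : ContinuousOn s (Ioo (-1 : ℝ) 1)) {A : ℝ}
    (h1 : s (-(1/2)) ≤ A) (h2 : A ≤ s (1/2)) :
    ∃ b ∈ Icc (-(1/2) : ℝ) (1/2), s b = A := by
  have hsub : Icc (-(1/2) : ℝ) (1/2) ⊆ Ioo (-1 : ℝ) 1 := by
    intro x hx; exact ⟨by linarith [hx.1], by linarith [hx.2]⟩
  have := intermediate_value_Icc (by norm_num : (-(1/2) : ℝ) ≤ 1/2) (hc.mono hsub)
  obtain ⟨b, hb, hsb⟩ := this ⟨h1, h2⟩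
  exact ⟨b, hb, hsb⟩

lemma key {s : ℝ → ℝ} (hc : ContinuousOn s (Ioo (-1 : ℝ) 1))
    (hm : StrictMonoOn s (Ioo (-1 : ℝ) 1))
    (hf : QALE (Ioo (-1 : ℝ) 1) (fun x => x) s)
    (hg : QALE (Ioo (-1 : ℝ) 1) (fun x => x ^ 3) s) : False := by
  have hsub : Icc (-(1/2) : ℝ) (1/2) ⊆ Ioo (-1 : ℝ) 1 := by
    intro x hx; exact ⟨by linarith [hx.1], by linarith [hx.2]⟩
  have hmemh : (1/2 : ℝ) ∈ Ioo (-1 : ℝ) 1 := by constructor <;> norm_num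
  have hmemnh : (-(1/2) : ℝ) ∈ Ioo (-1 : ℝ) 1 := by constructor <;> norm_num
  have hmem0 : (0 : ℝ) ∈ Ioo (-1 : ℝ) 1 := by constructor <;> norm_num
  set c : ℝ := s (1/2) - s 0 with hc_def
  set d : ℝ := s 0 - s (-(1/2)) with hd_def
  have hcpos : 0 < c := by
    have := hm hmem0 hmemh (by norm_num); simp [hc_def]; linarith
  have hdpos : 0 < d := by
    have := hm hmemnh hmem0 (by norm_num); simp [hd_def]; linarith
  have hmono := hm.monotoneOn
  -- main claim
  have claim : ∀ n : ℕ, 1 ≤ n → d * (n : ℝ)^2 ≤ c := by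
    intro n hn
    have hn0 : (0 : ℝ) < n := by exact_mod_cast Nat.lt_of_lt_of_le Nat.zero_lt_one hn
    have hn1 : (1 : ℝ) ≤ n := by exact_mod_cast hn
    have hamem : (1 / (2 * (n:ℝ))) ∈ Icc (-(1/2) : ℝ) (1/2) := by
      constructor
      · have : (0:ℝ) < 1 / (2*(n:ℝ)) := by positivity
        linarith
      · rw [div_le_div_iff₀ (by linarith) (by norm_num)]; linarith
    have hamem' := hsub hamem
    have hnamem : (-(1 / (2 * (n:ℝ)))) ∈ Icc (-(1/2) : ℝ) (1/2) := by
      constructor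
      · have := hamem.2; linarith
      · have := hamem.1; linarith
    have hnamem' := hsub hnamem
    -- Step 1 : s (1/(2n)) ≤ s 0 + c / n^3
    have step1 : s (1 / (2 * (n:ℝ))) ≤ s 0 + c / (n:ℝ)^3 := by
      set N := n ^ 3 with hN_def
      have hN : 0 < N := by positivity
      haveI : NeZero N := ⟨hN.ne'⟩
      have hNr : (N : ℝ) = (n : ℝ)^3 := by rw [hN_def]; push_cast; ring
      have hNr1 : (1:ℝ) ≤ (N:ℝ) := by rw [hNr]; nlinarith [hn1, sq_nonneg ((n:ℝ) - 1), sq_nonneg ((n:ℝ) + 1)]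
      set v : Fin N → ℝ := fun i => if i = 0 then (1/2 : ℝ) else 0 with hv_def
      have hv : ∀ i, v i ∈ Ioo (-1 : ℝ) 1 := by
        intro i; simp only [hv_def]; split
        · exact hmemh
        · exact hmem0
      have hsum3 : ∑ i, (v i)^3 = (1/8 : ℝ) := by
        have h : ∀ i, (v i)^3 = if i = (0 : Fin N) then (1/8 : ℝ) else 0 := by
          intro i; simp only [hv_def]; split <;> norm_num
        rw [Finset.sum_congr rfl (fun i _ => h i), sum_if]; ring
      have hsums : ∑ i, s (v i) = s (1/2) + ((N:ℝ) - 1) * s 0 := by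
        have h : ∀ i, s (v i) = if i = (0 : Fin N) then s (1/2) else s 0 := by
          intro i; simp only [hv_def]; split <;> rfl
        rw [Finset.sum_congr rfl (fun i _ => h i), sum_if]
      set A₁ : ℝ := (s (1/2) + ((N:ℝ) - 1) * s 0) / (N:ℝ) with hA1_def
      have hA1 : A₁ = s 0 + c / (N:ℝ) := by
        rw [hA1_def, hc_def]; field_simp; ring
      have hA1lo : s (-(1/2)) ≤ A₁ := by
        have : (0:ℝ) ≤ c / (N:ℝ) := by positivity
        rw [hA1]; simp only [hd_def] at hdpos; linarith
      have hA1hi : A₁ ≤ s (1/2) := by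
        have : c / (N:ℝ) ≤ c := div_le_self hcpos.le hNr1
        rw [hA1]; simp only [hc_def] at *; linarith
      obtain ⟨b, hbI, hsb⟩ := ivt_b hc hA1lo hA1hi
      have hab : 1 / (2 * (n:ℝ)) ≤ b := by
        refine hg N hN v hv _ b ⟨hamem', ?_⟩ ⟨hsub hbI, ?_⟩
        · show (1 / (2 * (n:ℝ)))^3 = (∑ i, (v i)^3) / (N:ℝ)
          rw [hsum3, hNr]; field_simp; ring
        · show s b = (∑ i, s (v i)) / (N:ℝ)
          rw [hsums, hsb, hA1_def]
      have := hmono hamem' (hsub hbI) hab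
      rw [hsb, hA1, hNr] at this; exact this
    -- Step 2 : s (-(1/(2n))) ≤ s 0 - d / n
    have step2 : s (-(1 / (2 * (n:ℝ)))) ≤ s 0 - d / (n:ℝ) := by
      have hNn : 0 < n := hn
      haveI : NeZero n := ⟨hNn.ne'⟩
      set v : Fin n → ℝ := fun i => if i = 0 then (-(1/2) : ℝ) else 0 with hv_def
      have hv : ∀ i, v i ∈ Ioo (-1 : ℝ) 1 := by
        intro i; simp only [hv_def]; split
        · exact hmemnh
        · exact hmem0
      have hsum1 : ∑ i, v i = (-(1/2) : ℝ) := by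
        rw [hv_def, sum_if]; ring
      have hsums : ∑ i, s (v i) = s (-(1/2)) + ((n:ℝ) - 1) * s 0 := by
        have h : ∀ i, s (v i) = if i = (0 : Fin n) then s (-(1/2)) else s 0 := by
          intro i; simp only [hv_def]; split <;> rfl
        rw [Finset.sum_congr rfl (fun i _ => h i), sum_if]
      set A₂ : ℝ := (s (-(1/2)) + ((n:ℝ) - 1) * s 0) / (n:ℝ) with hA2_def
      have hA2 : A₂ = s 0 - d / (n:ℝ) := by
        rw [hA2_def, hd_def]; field_simp; ring
      have hA2lo : s (-(1/2)) ≤ A₂ := by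
        have : d / (n:ℝ) ≤ d := div_le_self hdpos.le hn1
        rw [hA2]; simp only [hd_def] at *; linarith
      have hA2hi : A₂ ≤ s (1/2) := by
        have : (0:ℝ) ≤ d / (n:ℝ) := by positivity
        rw [hA2]; simp only [hc_def] at hcpos; linarith
      obtain ⟨b, hbI, hsb⟩ := ivt_b hc hA2lo hA2hi
      have hab : -(1 / (2 * (n:ℝ))) ≤ b := by
        refine hf n hNn v hv _ b ⟨hnamem', ?_⟩ ⟨hsub hbI, ?_⟩
        · show -(1 / (2 * (n:ℝ))) = (∑ i, v i) / (n:ℝ)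
          rw [hsum1]; field_simp
        · show s b = (∑ i, s (v i)) / (n:ℝ)
          rw [hsums, hsb, hA2_def]
      have := hmono hnamem' (hsub hbI) hab
      rw [hsb, hA2] at this; exact this
    -- Step 3 : s 0 ≤ (s (-(1/(2n))) + s (1/(2n))) / 2
    have step3 : 2 * s 0 ≤ s (-(1 / (2 * (n:ℝ)))) + s (1 / (2 * (n:ℝ))) := by
      haveI : NeZero 2 := ⟨two_ne_zero⟩
      set v : Fin 2 → ℝ := fun i => if i = 0 then -(1 / (2 * (n:ℝ))) else 1 / (2 * (n:ℝ)) with hv_def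
      have hv : ∀ i, v i ∈ Ioo (-1 : ℝ) 1 := by
        intro i; simp only [hv_def]; split
        · exact hnamem'
        · exact hamem'
      have hsum1 : ∑ i, v i = 0 := by
        rw [hv_def, sum_if]; push_cast; ring
      have hsums : ∑ i, s (v i) = s (-(1 / (2 * (n:ℝ)))) + ((2:ℝ) - 1) * s (1 / (2 * (n:ℝ))) := by
        have h : ∀ i, s (v i) = if i = (0 : Fin 2) then s (-(1 / (2 * (n:ℝ)))) else s (1 / (2 * (n:ℝ))) := by
          intro i; simp only [hv_def]; split <;> rfl
        rw [Finset.sum_congr rfl (fun i _ => h i), sum_if]; norm_num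
      set A₃ : ℝ := (s (-(1 / (2 * (n:ℝ)))) + ((2:ℝ) - 1) * s (1 / (2 * (n:ℝ)))) / (2:ℝ) with hA3_def
      have hlo1 : s (-(1/2)) ≤ s (-(1 / (2 * (n:ℝ)))) := hmono hmemnh hnamem' hnamem.1
      have hhi1 : s (-(1 / (2 * (n:ℝ)))) ≤ s (1/2) := hmono hnamem' hmemh hnamem.2
      have hlo2 : s (-(1/2)) ≤ s (1 / (2 * (n:ℝ))) := hmono hmemnh hamem' hamem.1
      have hhi2 : s (1 / (2 * (n:ℝ))) ≤ s (1/2) := hmono hamem' hmemh hamem.2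
      have hA3lo : s (-(1/2)) ≤ A₃ := by rw [hA3_def]; linarith
      have hA3hi : A₃ ≤ s (1/2) := by rw [hA3_def]; linarith
      obtain ⟨b, hbI, hsb⟩ := ivt_b hc hA3lo hA3hi
      have hab : (0:ℝ) ≤ b := by
        refine hf 2 (by norm_num) v hv 0 b ⟨hmem0, ?_⟩ ⟨hsub hbI, ?_⟩
        · show (0:ℝ) = (∑ i, v i) / (2:ℕ)
          rw [hsum1]; norm_num
        · show s b = (∑ i, s (v i)) / (2:ℕ)
          rw [hsums, hsb, hA3_def]; norm_num
      have := hmono hmem0 (hsub hbI) hab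
      rw [hsb, hA3_def] at this; linarith
    -- combine
    have h1 : d / (n:ℝ) ≤ c / (n:ℝ)^3 := by linarith
    have h2 : (0:ℝ) < (n:ℝ)^3 := by positivity
    rw [div_le_div_iff₀ hn0 h2] at h1
    nlinarith
  obtain ⟨n, hn⟩ := exists_nat_gt (max 1 (c / d))
  have hn1r : (1:ℝ) < n := lt_of_le_of_lt (le_max_left _ _) hn
  have hn1 : 1 ≤ n := by exact_mod_cast hn1r.le
  have hcd : c / d < n := lt_of_le_of_lt (le_max_right _ _) hn
  have := claim n hn1
  have : c < d * (n:ℝ) := by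
    rw [div_lt_iff₀ hdpos] at hcd; linarith
  nlinarith [claim n hn1]


/-- for `f x = x` and `g x = x^3` on `(−1,1)`, no continuous strictly
monotone `s` satisfies both `A^[f] ≤ A^[s]` and `A^[g] ≤ A^[s]`. -/
theorem no_common_upper_bound :
    ¬ ∃ s : ℝ → ℝ,
        ContinuousOn s (Set.Ioo (-1 : ℝ) 1) ∧
        (StrictMonoOn s (Set.Ioo (-1 : ℝ) 1) ∨ StrictAntiOn s (Set.Ioo (-1 : ℝ) 1)) ∧
        QALE (Set.Ioo (-1 : ℝ) 1) (fun x => x) s ∧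
        QALE (Set.Ioo (-1 : ℝ) 1) (fun x => x ^ 3) s := by
  rintro ⟨s, hcont, hmono | hanti, hf, hg⟩
  · exact key hcont hmono hf hg
  · have htrans : ∀ F : ℝ → ℝ, QALE (Set.Ioo (-1 : ℝ) 1) F s →
        QALE (Set.Ioo (-1 : ℝ) 1) F (fun x => -s x) := by
      intro F h n hn v hv a b ha hb
      refine h n hn v hv a b ha ⟨hb.1, ?_⟩
      have h2 := hb.2
      simp only at h2
      rw [Finset.sum_neg_distrib, neg_div] at h2
      linarith
    exact key hcont.neg
      (fun x hx y hy hxy => neg_lt_neg (hanti hx hy hxy))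
      (htrans _ hf) (htrans _ hg)
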